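/- Let r ≥ 2, e ≥ 1, and define B_j = r^{-1}(r-1)^j + (-1)^j(1 - r^{-1}) for j ≥ 2, and N_k by the formula N_k = k! e^k Σ_{λ₂,λ₃,…≥0, Σ j·λ_j = k} C((r+1)/e, Σλ_j) (Σλ_j)! Π_j (B_j/j!)^{λ_j}/(λ_j)!. Then N₂ = e(r² - 1) and N₃ = e²(r-2)(r²-1). -/

import Mathlib

/-- `B_j = r⁻¹(r-1)^j + (-1)^j(1 - r⁻¹)`. -/
noncomputable def Bcoef (r : ℚ) (j : ℕ) : ℚ :=
  r⁻¹ * (r - 1) ^ j + (-1) ^ j * (1 - r⁻¹)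

/-- Sequences `(λ_0, …, λ_k)` of non-negative integers with `λ_0 = λ_1 = 0`
and `∑ j·λ_j = k` (any sequence with `∑_{j ≥ 2} j λ_j = k` vanishes beyond
index `k`, so this captures all finitely supported such sequences). -/
def partSeqs (k : ℕ) : Finset (Fin (k + 1) → ℕ) :=
  (Fintype.piFinset fun _ => Finset.range (k + 1)).filter
    fun lam => (∑ j : Fin (k + 1), (j : ℕ) * lam j) = k ∧ ∀ j : Fin (k + 1), (j : ℕ) < 2 → lam j = 0

/-- `N_k = k! e^k ∑_{∑ jλ_j = k} C((r+1)/e, ∑λ_j)(∑λ_j)! ∏_j (B_j/j!)^{λ_j}/λ_j!`. -/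
noncomputable def Ncoef (r e k : ℕ) : ℚ :=
  (k.factorial : ℚ) * (e : ℚ) ^ k *
    ∑ lam ∈ partSeqs k,
      (((r + 1) / e).choose (∑ j : Fin (k + 1), lam j) : ℚ) * ((∑ j : Fin (k + 1), lam j).factorial : ℚ) *
        ∏ j : Fin (k + 1), (Bcoef (r : ℚ) (j : ℕ) / ((j : ℕ).factorial : ℚ)) ^ lam j /
          ((lam j).factorial : ℚ)

/-- `N₂ = e(r² - 1)` and `N₃ = e²(r-2)(r²-1)`. -/
theorem stmt12 (r e : ℕ) (hr : 2 ≤ r) (he : 1 ≤ e) (hdvd : e ∣ r + 1) :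
    Ncoef r e 2 = (e : ℚ) * ((r : ℚ) ^ 2 - 1) ∧
      Ncoef r e 3 = (e : ℚ) ^ 2 * ((r : ℚ) - 2) * ((r : ℚ) ^ 2 - 1) := by
  have hr0 : (r : ℚ) ≠ 0 := Nat.cast_ne_zero.mpr (by omega)
  have he0 : (e : ℚ) ≠ 0 := Nat.cast_ne_zero.mpr (by omega)
  obtain ⟨q, hq⟩ := hdvd
  have hq' : (r + 1) / e = q := by rw [hq, Nat.mul_div_cancel_left _ (by omega)]
  have hcast : (e : ℚ) * q = (r : ℚ) + 1 := by
    have := congrArg (Nat.cast : ℕ → ℚ) hq; push_cast at this; linarith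
  have hqv : (q : ℚ) = ((r : ℚ) + 1) / (e : ℚ) := by field_simp [mul_comm, ← hcast]; linarith
  constructor
  · have h2 : partSeqs 2 = {![0, 0, 1]} := by decide
    rw [Ncoef, h2, Finset.sum_singleton]
    simp [Fin.sum_univ_succ, Fin.prod_univ_succ, Bcoef, hq', Nat.factorial]
    rw [hqv]; field_simp; ring
  · have h3 : partSeqs 3 = {![0, 0, 0, 1]} := by decide
    rw [Ncoef, h3, Finset.sum_singleton]
    simp [Fin.sum_univ_succ, Fin.prod_univ_succ, Bcoef, hq', Nat.factorial]
    rw [hqv]; field_simp; ring
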